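/- Non-exchangeability of the directly restricted three-urn scheme: there exist N ∈ ℕ and counts m₁, m₂, m₃ ∈ {1,…,N} such that, defining p*(x | m, N) = (m_k/(N+1-m_k)) / Σ_{j=1}^3 (m_j/(N+1-m_j)) for x = e_k (the indicator vector with a one in position k), the two-step probability p*(e₁ | m, N) · p*(e₂ | m + e₁, N+1) ≠ p*(e₂ | m, N) · p*(e₁ | m + e₂, N+1). -/

import Mathlib

open Finset

/-- Directly restricted three-urn predictive: probability that the single red ball is in urn `k`,
given red counts `m` out of `N` total draws. -/
noncomputable def pStar (N : ℕ) (m : Fin 3 → ℕ) (k : Fin 3) : ℝ :=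
  ((m k : ℝ) / ((N : ℝ) + 1 - m k)) / ∑ j, (m j : ℝ) / ((N : ℝ) + 1 - m j)

theorem directly_restricted_not_exchangeable :
    ∃ (N : ℕ) (m : Fin 3 → ℕ), (∀ i, 1 ≤ m i ∧ m i ≤ N) ∧
      pStar N m 0 * pStar (N + 1) (fun j => m j + if j = 0 then 1 else 0) 1 ≠
        pStar N m 1 * pStar (N + 1) (fun j => m j + if j = 1 then 1 else 0) 0 := by
  refine ⟨2, ![1, 2, 1], ?_, ?_⟩
  · intro i; fin_cases i <;> simp
  · simp only [pStar, Fin.sum_univ_three]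
    norm_num [Fin.ext_iff, Matrix.cons_val_zero, Matrix.cons_val_one, Matrix.head_cons, Matrix.cons_val_two, Matrix.tail_cons]
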